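/- Let p be a monic irreducible polynomial with integer coefficients of degree 2000 such that p(n) divides p(n^2) for every natural number n. Then p = Φ_j for some j ∈ {2525, 3333, 3765, 4125}. -/

import Mathlib

def totpp (p k : ℕ) : ℕ := if k = 0 then 1 else p ^ (k - 1) * (p - 1)

lemma totient_pp {p : ℕ} (hp : p.Prime) (k : ℕ) : Nat.totient (p ^ k) = totpp p k := by
  cases k with
  | zero => simp [totpp]
  | succ n => simp [totpp, Nat.totient_prime_pow hp (Nat.succ_pos n)]

lemma prime_of_dvd_2000 {q : ℕ} (hq : q.Prime) (h : q ∣ 2000) : q = 2 ∨ q = 5 := by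
  have h2000 : (2000 : ℕ) = 2 ^ 4 * 5 ^ 3 := by norm_num
  rw [h2000] at h
  rcases (Nat.Prime.dvd_mul hq).1 h with h' | h'
  · exact Or.inl ((Nat.prime_dvd_prime_iff_eq hq (by norm_num)).1 (hq.dvd_of_dvd_pow h'))
  · exact Or.inr ((Nat.prime_dvd_prime_iff_eq hq (by norm_num)).1 (hq.dvd_of_dvd_pow h'))

set_option maxRecDepth 10000 in
lemma prime_candidates {q : ℕ} (hq : q.Prime) (hne : q ≠ 2) (h : q - 1 ∣ 2000) :
    q ∈ ({3,5,11,17,41,101,251,401} : Finset ℕ) := by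
  have h2 : 2 ≤ q := hq.two_le
  obtain ⟨m, hm⟩ : ∃ m, q = m + 1 := ⟨q - 1, by omega⟩
  subst hm
  have hmem : m ∈ Nat.divisors 2000 := Nat.mem_divisors.2 ⟨by simpa using h, by norm_num⟩
  have hdiv : Nat.divisors 2000 =
      ({1,2,4,5,8,10,16,20,25,40,50,80,100,125,200,250,400,500,1000,2000} : Finset ℕ) := by
    decide
  rw [hdiv] at hmem
  fin_cases hmem <;>
    first
      | decide
      | (exact absurd rfl hne)
      | (exact absurd hq (by norm_num))

set_option synthInstance.maxSize 20000 in
set_option maxHeartbeats 2000000 in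
lemma key_arith : ∀ a < 2, ∀ b < 5, ∀ c < 2, ∀ d < 2, ∀ e < 2, ∀ f < 2, ∀ g < 2, ∀ h < 2,
    totpp 3 a * (totpp 5 b * (totpp 11 c * (totpp 17 d * (totpp 41 e *
      (totpp 101 f * (totpp 251 g * totpp 401 h)))))) = 2000 →
    (3:ℕ) ^ a * (5 ^ b * (11 ^ c * (17 ^ d * (41 ^ e * (101 ^ f * (251 ^ g * 401 ^ h)))))) = 2525 ∨
    (3:ℕ) ^ a * (5 ^ b * (11 ^ c * (17 ^ d * (41 ^ e * (101 ^ f * (251 ^ g * 401 ^ h)))))) = 3333 ∨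
    (3:ℕ) ^ a * (5 ^ b * (11 ^ c * (17 ^ d * (41 ^ e * (101 ^ f * (251 ^ g * 401 ^ h)))))) = 3765 ∨
    (3:ℕ) ^ a * (5 ^ b * (11 ^ c * (17 ^ d * (41 ^ e * (101 ^ f * (251 ^ g * 401 ^ h)))))) = 4125 := by
  decide

lemma classify {d : ℕ} (hodd : Odd d) (ht : d.totient = 2000) :
    d = 2525 ∨ d = 3333 ∨ d = 3765 ∨ d = 4125 := by
  have hd0 : d ≠ 0 := by rintro rfl; simp at ht
  -- prime factors are in the candidate set
  have hsub : d.primeFactors ⊆ ({3,5,11,17,41,101,251,401} : Finset ℕ) := by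
    intro q hq
    obtain ⟨hqp, hqd, -⟩ := Nat.mem_primeFactors.1 hq
    have hne2 : q ≠ 2 := by
      rintro rfl
      exact (Nat.not_even_iff_odd.2 hodd) (even_iff_two_dvd.2 hqd)
    have h1 : q - 1 ∣ 2000 := by
      have := Nat.totient_dvd_of_dvd hqd
      rwa [ht, Nat.totient_prime hqp] at this
    exact prime_candidates hqp hne2 h1
  -- exponent bounds
  have hexp : ∀ q : ℕ, q.Prime → q ≠ 5 → d.factorization q ≤ 1 := by
    intro q hqp hq5
    by_contra hc
    push_neg at hc
    have hdvd : q ^ 2 ∣ d := (Nat.Prime.pow_dvd_iff_le_factorization hqp hd0).2 hc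
    have ht2 : Nat.totient (q ^ 2) ∣ 2000 := ht ▸ Nat.totient_dvd_of_dvd hdvd
    rw [totient_pp hqp] at ht2
    have hq2000 : q ∣ 2000 := dvd_trans ⟨q - 1, by simp [totpp]⟩ ht2
    rcases prime_of_dvd_2000 hqp hq2000 with rfl | rfl
    · exact (Nat.not_even_iff_odd.2 hodd)
        (even_iff_two_dvd.2 (dvd_trans (dvd_pow_self 2 two_ne_zero) hdvd))
    · exact hq5 rfl
  have hexp5 : d.factorization 5 ≤ 4 := by
    by_contra hc
    push_neg at hc
    have hdvd : 5 ^ 5 ∣ d := (Nat.Prime.pow_dvd_iff_le_factorization (by norm_num) hd0).2 hc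
    have ht2 : Nat.totient (5 ^ 5) ∣ 2000 := ht ▸ Nat.totient_dvd_of_dvd hdvd
    rw [totient_pp (by norm_num)] at ht2
    have := Nat.le_of_dvd (by norm_num) ht2
    simp [totpp] at this
  -- expand d and totient d as products over the candidate set
  have hsupp : d.factorization.support ⊆ ({3,5,11,17,41,101,251,401} : Finset ℕ) := by
    rwa [Nat.support_factorization]
  have hd : d.factorization.prod (· ^ ·) = d := Nat.factorization_prod_pow_eq_self hd0
  rw [Finsupp.prod_of_support_subset _ hsupp _ (by intro i _; rfl)] at hd
  have hφ : Nat.totient d = d.factorization.prod fun p k => Nat.totient (p ^ k) :=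
    Nat.multiplicative_factorization Nat.totient (fun x y h => Nat.totient_mul h)
      Nat.totient_one hd0
  rw [Finsupp.prod_of_support_subset _ hsupp _ (by intro i _; simp)] at hφ
  set e := fun q => d.factorization q with he
  have hprod : (3:ℕ) ^ e 3 * (5 ^ e 5 * (11 ^ e 11 * (17 ^ e 17 * (41 ^ e 41 *
      (101 ^ e 101 * (251 ^ e 251 * 401 ^ e 401)))))) = d := by
    rw [← hd]
    simp [Finset.prod_insert, Finset.mem_insert]
    rfl
  have htot : totpp 3 (e 3) * (totpp 5 (e 5) * (totpp 11 (e 11) * (totpp 17 (e 17) *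
      (totpp 41 (e 41) * (totpp 101 (e 101) * (totpp 251 (e 251) * totpp 401 (e 401))))))) = 2000 := by
    rw [← ht, hφ]
    simp only [← totient_pp (by norm_num : Nat.Prime 3), ← totient_pp (by norm_num : Nat.Prime 5),
      ← totient_pp (by norm_num : Nat.Prime 11), ← totient_pp (by norm_num : Nat.Prime 17),
      ← totient_pp (by norm_num : Nat.Prime 41), ← totient_pp (by norm_num : Nat.Prime 101),
      ← totient_pp (by norm_num : Nat.Prime 251), ← totient_pp (by norm_num : Nat.Prime 401)]
    simp [Finset.prod_insert, Finset.mem_insert]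
    rfl
  have := key_arith (e 3) (Nat.lt_succ_of_le (hexp 3 (by norm_num) (by norm_num)))
    (e 5) (Nat.lt_succ_of_le hexp5) (e 11) (Nat.lt_succ_of_le (hexp 11 (by norm_num) (by norm_num)))
    (e 17) (Nat.lt_succ_of_le (hexp 17 (by norm_num) (by norm_num)))
    (e 41) (Nat.lt_succ_of_le (hexp 41 (by norm_num) (by norm_num)))
    (e 101) (Nat.lt_succ_of_le (hexp 101 (by norm_num) (by norm_num)))
    (e 251) (Nat.lt_succ_of_le (hexp 251 (by norm_num) (by norm_num)))
    (e 401) (Nat.lt_succ_of_le (hexp 401 (by norm_num) (by norm_num))) htot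
  rw [hprod] at this
  exact this

open Polynomial

lemma eval_cast_map {S : Type*} [Ring S] (s : Polynomial ℤ) (m : ℤ) :
    (s.map (Int.castRingHom S)).eval ((m : ℤ) : S) = ((s.eval m : ℤ) : S) := by
  rw [eval_intCast_map]; rfl

lemma eval_ne_zero_of_irred {p : ℤ[X]} (hirr : Irreducible p) (hdeg : p.natDegree = 2000) :
    ∀ z : ℤ, p.eval z ≠ 0 := by
  intro z h0
  obtain ⟨c, hc⟩ := dvd_iff_isRoot.2 h0
  rcases hirr.isUnit_or_isUnit hc with hu | hu
  · exact absurd (natDegree_eq_zero_of_isUnit hu) (by rw [natDegree_X_sub_C]; norm_num)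
  · have hc0 : c ≠ 0 := by
      rintro rfl
      rw [mul_zero] at hc
      exact hirr.ne_zero hc
    have h1 : p.natDegree = 1 := by
      rw [hc, natDegree_mul (X_sub_C_ne_zero z) hc0, natDegree_X_sub_C,
        natDegree_eq_zero_of_isUnit hu]
    omega

theorem millennial_polynomial
    (p : Polynomial ℤ) (hmonic : p.Monic) (hirr : Irreducible p)
    (hdeg : p.natDegree = 2000)
    (h : ∀ n : ℕ, p.eval (n : ℤ) ∣ p.eval ((n : ℤ) ^ 2)) :
    ∃ j ∈ ({2525, 3333, 3765, 4125} : Finset ℕ), p = cyclotomic j ℤ := by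
  have hne := eval_ne_zero_of_irred hirr hdeg
  -- Step 1 : p ∣ p.comp (X ^ 2)
  have hdvd : p ∣ p.comp (X ^ 2 : ℤ[X]) := by
    set q : ℤ[X] := p.comp (X ^ 2) with hqdef
    have hqp := modByMonic_add_div q p
    have hr : ∀ n : ℕ, p.eval (n : ℤ) ∣ (q %ₘ p).eval (n : ℤ) := by
      intro n
      have he : (q %ₘ p).eval (n : ℤ) =
          q.eval (n : ℤ) - p.eval (n : ℤ) * ((q /ₘ p).eval (n : ℤ)) := by
        have h0 := congrArg (Polynomial.eval (n : ℤ)) hqp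
        simp only [eval_add, eval_mul] at h0
        linarith
      have hqe : q.eval (n : ℤ) = p.eval ((n : ℤ) ^ 2) := by
        simp [hqdef, eval_comp]
      rw [he, hqe]
      exact dvd_sub (h n) (Dvd.intro _ rfl)
    have hrz : q %ₘ p = 0 := by
      by_contra hr0
      set r : ℤ[X] := q %ₘ p with hrdef
      set P : ℝ[X] := p.map (Int.castRingHom ℝ) with hPdef
      set R : ℝ[X] := r.map (Int.castRingHom ℝ) with hRdef
      have hPdeg : 0 < P.degree := by
        rw [hPdef, hmonic.degree_map, degree_eq_natDegree hmonic.ne_zero, hdeg]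
        exact_mod_cast Nat.succ_le_of_lt (by norm_num)
      have hRP : R.degree < P.degree := by
        rw [hPdef, hmonic.degree_map]
        exact lt_of_le_of_lt (degree_map_le) (degree_modByMonic_lt q hmonic)
      have h1 := div_tendsto_zero_of_degree_lt R P hRP
      have h2 := abs_tendsto_atTop P hPdeg
      have h3 : ∀ᶠ x : ℝ in Filter.atTop, |R.eval x| / |P.eval x| < 1 := by
        have := h1.eventually (Metric.ball_mem_nhds (0 : ℝ) one_pos)
        simpa [Real.dist_eq, abs_div] using this
      have h4 : ∀ᶠ x : ℝ in Filter.atTop, 1 ≤ |P.eval x| := h2.eventually_ge_atTop 1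
      have h5 : ∀ᶠ n : ℕ in Filter.atTop,
          |R.eval (n : ℝ)| / |P.eval (n : ℝ)| < 1 ∧ 1 ≤ |P.eval (n : ℝ)| :=
        (tendsto_natCast_atTop_atTop).eventually (h3.and h4)
      obtain ⟨N, hN⟩ := Filter.eventually_atTop.1 h5
      have hroots : ∀ k : ℕ, r.IsRoot ((N + k : ℕ) : ℤ) := by
        intro k
        obtain ⟨hlt, hge⟩ := hN (N + k) (Nat.le_add_right N k)
        by_contra hnr
        have hle : |p.eval ((N + k : ℕ) : ℤ)| ≤ |r.eval ((N + k : ℕ) : ℤ)| :=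
          Int.le_of_dvd (abs_pos.2 hnr) ((abs_dvd _ _).2 ((dvd_abs _ _).2 (hr (N + k))))
        have hPe : P.eval ((N + k : ℕ) : ℝ) = ((p.eval ((N + k : ℕ) : ℤ) : ℤ) : ℝ) := by
          rw [hPdef, show (((N + k : ℕ)) : ℝ) = (((N + k : ℕ) : ℤ) : ℝ) by push_cast; ring]
          exact eval_cast_map p _
        have hRe : R.eval ((N + k : ℕ) : ℝ) = ((r.eval ((N + k : ℕ) : ℤ) : ℤ) : ℝ) := by
          rw [hRdef, show (((N + k : ℕ)) : ℝ) = (((N + k : ℕ) : ℤ) : ℝ) by push_cast; ring]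
          exact eval_cast_map r _
        rw [div_lt_one (lt_of_lt_of_le one_pos hge)] at hlt
        have hcast : |((p.eval ((N + k : ℕ) : ℤ) : ℤ) : ℝ)| ≤ |((r.eval ((N + k : ℕ) : ℤ) : ℤ) : ℝ)| := by
          have := (@Int.cast_le ℝ _ _ _).2 hle
          push_cast at this
          exact this
        rw [hPe, hRe] at hlt
        linarith
      have hinf : {x : ℤ | r.IsRoot x}.Infinite :=
        Set.infinite_of_injective_forall_mem
          (f := fun k : ℕ => ((N + k : ℕ) : ℤ))
          (fun a b hab => by simpa using hab) hroots
      exact hr0 (r.eq_zero_of_infinite_isRoot hinf)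
    exact ⟨q /ₘ p, by conv_lhs => rw [← hqp, hrz, zero_add]⟩
  -- Step 2 : roots are roots of unity
  set Q : ℂ[X] := p.map (Int.castRingHom ℂ) with hQdef
  have hQ0 : Q ≠ 0 := (hmonic.map _).ne_zero
  have hQdeg : 0 < Q.degree := by
    rw [hQdef, hmonic.degree_map, degree_eq_natDegree hmonic.ne_zero, hdeg]
    exact_mod_cast Nat.succ_le_of_lt (by norm_num)
  obtain ⟨α, hα⟩ := Complex.exists_root hQdeg
  obtain ⟨u, hu⟩ := hdvd
  have hsq : ∀ z : ℂ, Q.IsRoot z → Q.IsRoot (z ^ 2) := by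
    intro z hz
    have hmap : Q.comp (X ^ 2) = Q * (u.map (Int.castRingHom ℂ)) := by
      rw [hQdef, show (X ^ 2 : ℂ[X]) = (X ^ 2 : ℤ[X]).map (Int.castRingHom ℂ) by simp,
        ← Polynomial.map_comp, hu, Polynomial.map_mul]
    have := congrArg (Polynomial.eval z) hmap
    simp only [eval_comp, eval_pow, eval_X, eval_mul] at this
    rw [IsRoot.def, this, hz, zero_mul]
  have hαne : α ≠ 0 := by
    rintro rfl
    have : Q.eval (((0 : ℤ)) : ℂ) = ((p.eval 0 : ℤ) : ℂ) := by
      exact eval_cast_map p 0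
    rw [IsRoot.def] at hα
    rw [show ((0 : ℤ) : ℂ) = 0 by norm_num] at this
    rw [hα] at this
    exact hne 0 (by exact_mod_cast this.symm)
  have hpow : ∀ k : ℕ, Q.IsRoot (α ^ 2 ^ k) := by
    intro k
    induction k with
    | zero => simpa using hα
    | succ n ih =>
      have := hsq _ ih
      rwa [← pow_mul, ← pow_succ] at this
  obtain ⟨a, -, b, -, hab, heq⟩ :=
    Set.infinite_univ.exists_ne_map_eq_of_mapsTo
      (f := fun k : ℕ => α ^ 2 ^ k) (fun k _ => by exact hpow k) (finite_setOf_isRoot hQ0)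
  have hfo : IsOfFinOrder α := by
    have key : ∀ a b : ℕ, a < b → α ^ 2 ^ a = α ^ 2 ^ b → IsOfFinOrder α := by
      intro a b hab heq
      refine isOfFinOrder_iff_pow_eq_one.2 ⟨2 ^ b - 2 ^ a, ?_, ?_⟩
      · have := Nat.pow_lt_pow_right (by norm_num : 1 < 2) hab
        omega
      · have h2 : α ^ 2 ^ a * α ^ (2 ^ b - 2 ^ a) = α ^ 2 ^ a * 1 := by
          rw [← pow_add, mul_one]
          rw [show 2 ^ a + (2 ^ b - 2 ^ a) = 2 ^ b by
            have := Nat.pow_le_pow_right (by norm_num : 0 < 2) hab.le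
            omega]
          exact heq.symm
        exact mul_left_cancel₀ (pow_ne_zero _ hαne) h2
    rcases hab.lt_or_gt with hl | hl
    · exact key a b hl heq
    · exact key b a hl heq.symm
  set d := orderOf α with hddef
  have hdpos : 0 < d := hfo.orderOf_pos
  have hprim : IsPrimitiveRoot α d := IsPrimitiveRoot.orderOf α
  -- Step 3 : p is the minimal polynomial, hence cyclotomic
  have haev : aeval α p = 0 := by
    rw [aeval_def, ← eval_map]
    exact hα
  have hint : IsIntegral ℤ α := ⟨p, hmonic, by rw [← aeval_def]; exact haev⟩
  have hmin : minpoly ℤ α = p := by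
    obtain ⟨c, hc⟩ := minpoly.isIntegrallyClosed_dvd hint haev
    rcases hirr.isUnit_or_isUnit hc with hu' | hu'
    · exact absurd (natDegree_eq_zero_of_isUnit hu') (minpoly.natDegree_pos hint).ne'
    · exact eq_of_monic_of_associated (minpoly.monic hint) hmonic
        ⟨hu'.unit, by rw [hu'.unit_spec]; exact hc.symm⟩
  have hcyc : cyclotomic d ℤ = p := by
    rw [cyclotomic_eq_minpoly hprim hdpos, hmin]
  have htot : Nat.totient d = 2000 := by
    have h1 := natDegree_cyclotomic d ℤ
    rw [hcyc, hdeg] at h1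
    omega
  -- Step 4 : d is odd
  haveI : NeZero ((d : ℕ) : ℂ) := ⟨Nat.cast_ne_zero.2 hdpos.ne'⟩
  have hQcyc : Q = cyclotomic d ℂ := by
    rw [hQdef, ← hcyc, map_cyclotomic_int]
  have hprim2 : IsPrimitiveRoot (α ^ 2) d := by
    rw [← isRoot_cyclotomic_iff (R := ℂ) (n := d), ← hQcyc]
    exact hsq α hα
  have hd2 : d = orderOf (α ^ 2) := hprim2.unique (IsPrimitiveRoot.orderOf _)
  have hgcd : d / Nat.gcd d 2 = d := by
    rw [← orderOf_pow' α (two_ne_zero), ← hd2]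
  have hodd : Odd d := by
    rcases Nat.div_eq_self.1 hgcd with h0 | h1
    · omega
    · rw [Nat.odd_iff]
      have : ¬ (2 ∣ d) := by
        intro hdvd2
        have := Nat.dvd_gcd hdvd2 (dvd_refl 2)
        omega
      omega
  rcases classify hodd htot with h' | h' | h' | h'
  · exact ⟨2525, by decide, by rw [← hcyc, h']⟩
  · exact ⟨3333, by decide, by rw [← hcyc, h']⟩
  · exact ⟨3765, by decide, by rw [← hcyc, h']⟩
  · exact ⟨4125, by decide, by rw [← hcyc, h']⟩
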